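/- Let λ be an infinite type, let κ = 2^#λ, and let {f_{(η,φ)} : (η,φ) ∈ Λ_κ} be a κ-branching independent composition engine on λ. Let L be a complete algebraic lattice, let C be the set of compact elements of L other than the smallest element, and let c : Λ_κ → C be a surjective enumeration satisfying: (2) for all (η,φ) ∈ Λ_κ and α < κ, c_{(η,φ)} ≤ c_{(η*α, φ*0)} ∨ c_{(η*α, φ*1)}. For an ideal I of the join-semilattice (C, ∨), let F(I) denote the submonoid of λ^λ generated by {f_{(η,φ)} : c_{(η,φ)} ∈ I}. Then for any two distinct ideals I and J of (C, ∨), F(I) ≠ F(J). -/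

import Mathlib

/-- `Λ_κ`: pairs `(η, φ)` of sequences of equal finite length `n ≥ 1` with entries in `I` and in
`2` respectively, coded as nonempty lists of pairs. -/
abbrev Lam (I : Type u) : Type u := {l : List (I × Bool) // l ≠ []}

/-- `(η * a, φ * b)`: extension of the pair of sequences `p` by the entries `a` and `b`. -/
def Lam.ext {I : Type u} (p : Lam I) (a : I) (b : Bool) : Lam I :=
  ⟨p.val ++ [(a, b)], by simp⟩

/-- A finite list of elements of `Λ_κ` is reduced iff it does not contain both
`(η * a, φ * 0)` and `(η * a, φ * 1)` for any `(η, φ) ∈ Λ_κ` and `a`. -/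
def Reduced {I : Type u} (P : List (Lam I)) : Prop :=
  ¬ ∃ (p : Lam I) (a : I), Lam.ext p a false ∈ P ∧ Lam.ext p a true ∈ P

/-- An ideal of the join-semilattice `(C, ∨)`: a (possibly empty) subset of `C` which is
downward closed in `C` and closed under finite joins. -/
def IsIdealIn {L : Type v} [CompleteLattice L] (C J : Set L) : Prop :=
  J ⊆ C ∧ (∀ x ∈ J, ∀ y ∈ C, y ≤ x → y ∈ J) ∧ (∀ x ∈ J, ∀ y ∈ J, x ⊔ y ∈ J)

/-- `F(J)`: the submonoid of `λ → λ` (under composition) generated by the functions `f_p` for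
those indices `p` with `c_p ∈ J`. -/
def Fmon {α : Type u} {I : Type u} {L : Type v} [CompleteLattice L]
    (f : Lam I → Equiv.Perm α) (c : Lam I → L) (J : Set L) : Submonoid (Function.End α) :=
  Submonoid.closure {g : Function.End α | ∃ p : Lam I, c p ∈ J ∧ g = ⇑(f p)}

/-- coercion as a monoid hom from `Perm α` to `Function.End α`. -/
def permToEnd (α : Type u) : Equiv.Perm α →* Function.End α where
  toFun e := ⇑e
  map_one' := rfl
  map_mul' _ _ := rfl

lemma Lam.ext_false_ne_true {I : Type u} (p : Lam I) (a : I) :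
    Lam.ext p a false ≠ Lam.ext p a true := by
  simp [Lam.ext, Subtype.ext_iff]

lemma reduced_singleton {I : Type u} (p : Lam I) : Reduced [p] := by
  rintro ⟨r, a, h0, h1⟩
  simp only [List.mem_singleton] at h0 h1
  exact Lam.ext_false_ne_true r a (h0.trans h1.symm)

lemma pairwise_commute_map {α I : Type u} (f : Lam I → Equiv.Perm α)
    (hf2 : ∀ p q : Lam I, f p * f q = f q * f p) (Q : List (Lam I)) :
    (Q.map f).Pairwise Commute :=
  List.pairwise_map.mpr (List.pairwise_of_forall_mem_list fun p _ q _ => hf2 p q)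

lemma reduce_list {α I : Type u} {L : Type v} [CompleteLattice L]
    (f : Lam I → Equiv.Perm α)
    (hf1 : ∀ (p : Lam I) (a : I), f p = f (Lam.ext p a false) * f (Lam.ext p a true))
    (hf2 : ∀ p q : Lam I, f p * f q = f q * f p)
    (C : Set L) (c : Lam I → L) (hcC : ∀ p, c p ∈ C)
    (h2 : ∀ (p : Lam I) (a : I), c p ≤ c (Lam.ext p a false) ⊔ c (Lam.ext p a true))
    (J' : Set L) (hJ' : IsIdealIn C J') :
    ∀ (n : ℕ) (Q : List (Lam I)), (Q.map fun q => q.val.length).sum ≤ n →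
      (∀ q ∈ Q, c q ∈ J') →
      ∃ Q', Reduced Q' ∧ (∀ q ∈ Q', c q ∈ J') ∧ (Q'.map f).prod = (Q.map f).prod := by
  classical
  intro n
  induction n using Nat.strong_induction_on with
  | _ n ih =>
    intro Q hlen hQ
    by_cases hred : Reduced Q
    · exact ⟨Q, hred, hQ, rfl⟩
    · rw [Reduced, not_not] at hred
      obtain ⟨r, a, h0, h1⟩ := hred
      set q0 := Lam.ext r a false with hq0
      set q1 := Lam.ext r a true with hq1
      have hmem1 : q1 ∈ Q.erase q0 :=
        (List.mem_erase_of_ne (Lam.ext_false_ne_true r a).symm).mpr h1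
      set Q2 := (Q.erase q0).erase q1 with hQ2
      have hperm : Q.Perm (q0 :: q1 :: Q2) :=
        (List.perm_cons_erase h0).trans ((List.perm_cons_erase hmem1).cons q0)
      have hprod : (Q.map f).prod = ((q0 :: q1 :: Q2).map f).prod :=
        (hperm.map f).prod_eq' (pairwise_commute_map f hf2 Q)
      have hsub : ∀ q ∈ Q2, q ∈ Q := fun q hq =>
        List.mem_of_mem_erase (List.mem_of_mem_erase hq)
      -- length decreases
      have hlen2 : ((r :: Q2).map fun q => q.val.length).sum < n := by
        have := (hperm.map fun q => q.val.length).sum_eq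
        simp only [List.map_cons, List.sum_cons] at this ⊢
        have hq0len : q0.val.length = r.val.length + 1 := by simp [hq0, Lam.ext]
        have hq1len : q1.val.length = r.val.length + 1 := by simp [hq1, Lam.ext]
        omega
      have hcr : c r ∈ J' := by
        have hjoin : c q0 ⊔ c q1 ∈ J' := hJ'.2.2 _ (hQ _ h0) _ (hQ _ h1)
        exact hJ'.2.1 _ hjoin _ (hcC r) (h2 r a)
      obtain ⟨Q', hred', hQ', hprod'⟩ := ih _ hlen2 (r :: Q2) le_rfl
        (fun q hq => by
          rcases List.mem_cons.mp hq with h | h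
          · exact h ▸ hcr
          · exact hQ _ (hsub _ h))
      refine ⟨Q', hred', hQ', ?_⟩
      rw [hprod', hprod]
      simp only [List.map_cons, List.prod_cons, ← mul_assoc, hq0, hq1, ← hf1 r a]

lemma extract_list {α I : Type u} {L : Type v} [CompleteLattice L]
    (f : Lam I → Equiv.Perm α) (c : Lam I → L) (J' : Set L) :
    ∀ l : List (Function.End α),
      (∀ y ∈ l, ∃ p : Lam I, c p ∈ J' ∧ y = ⇑(f p)) →
      ∃ Q : List (Lam I), (∀ q ∈ Q, c q ∈ J') ∧
        Q.map (fun q => (⇑(f q) : Function.End α)) = l := by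
  intro l
  induction l with
  | nil => exact fun _ => ⟨[], by simp, rfl⟩
  | cons y l ihl =>
    intro h
    obtain ⟨p, hp, hy⟩ := h y List.mem_cons_self
    obtain ⟨Q, hQ, hQl⟩ := ihl fun z hz => h z (List.mem_cons_of_mem _ hz)
    exact ⟨p :: Q, fun q hq => by
      rcases List.mem_cons.mp hq with h | h
      · exact h ▸ hp
      · exact hQ _ h, by simp [hQl, hy]; rfl⟩

lemma Fmon_key {α I : Type u} {L : Type v} [CompleteLattice L]
    (f : Lam I → Equiv.Perm α)
    (hf1 : ∀ (p : Lam I) (a : I), f p = f (Lam.ext p a false) * f (Lam.ext p a true))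
    (hf2 : ∀ p q : Lam I, f p * f q = f q * f p)
    (hf3 : ∀ P Q : List (Lam I), Reduced P → Reduced Q → ¬ P.Perm Q →
      (P.map f).prod ≠ (Q.map f).prod)
    (C : Set L) (c : Lam I → L) (hcC : ∀ p, c p ∈ C)
    (hcsurj : ∀ x ∈ C, ∃ p, c p = x)
    (h2 : ∀ (p : Lam I) (a : I), c p ≤ c (Lam.ext p a false) ⊔ c (Lam.ext p a true))
    (J J' : Set L) (hJ : IsIdealIn C J) (hJ' : IsIdealIn C J')
    (x : L) (hxJ : x ∈ J) (hxJ' : x ∉ J') : Fmon f c J ≠ Fmon f c J' := by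
  intro heq
  obtain ⟨p, hp⟩ := hcsurj x (hJ.1 hxJ)
  subst hp
  have hmem : (⇑(f p) : Function.End α) ∈ Fmon f c J := by
    exact Submonoid.subset_closure ⟨p, hxJ, rfl⟩
  rw [heq] at hmem
  obtain ⟨l, hl, hlprod⟩ := Submonoid.exists_list_of_mem_closure (M := Function.End α) hmem
  obtain ⟨Q, hQ, hQl⟩ := extract_list f c J' l hl
  have hφ : permToEnd α ((Q.map f).prod) = permToEnd α (f p) := by
    rw [map_list_prod]
    calc ((Q.map f).map (permToEnd α)).prod = l.prod := by
          rw [← hQl, List.map_map]; rfl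
      _ = permToEnd α (f p) := hlprod
  have hinj : Function.Injective (permToEnd α) := fun a b h => Equiv.coe_fn_injective h
  have hprodeq : (Q.map f).prod = f p := hinj hφ
  obtain ⟨Q', hred', hQ', hprod'⟩ := reduce_list f hf1 hf2 C c hcC h2 J' hJ'
    ((Q.map fun q => q.val.length).sum) Q le_rfl hQ
  have hperm : List.Perm [p] Q' := by
    by_contra h
    exact hf3 [p] Q' (reduced_singleton p) hred' h (by simp [hprod', hprodeq])
  have : Q' = [p] := (List.singleton_perm.mp hperm).symm
  exact hxJ' (hQ' p (this ▸ List.mem_singleton_self p))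

/-- given a `κ`-ICE `f` on an infinite `λ` (`κ = 2 ^ #λ`) and an enumeration `c`
of the nonbottom compact elements `C` of a complete algebraic lattice `L` satisfying property
(2), distinct ideals of `(C, ∨)` give rise to distinct submonoids: `I ≠ J → F(I) ≠ F(J)`. -/
theorem Fmon_injective (α : Type u) [Infinite α] (I : Type u)
    (hI : Cardinal.mk I = 2 ^ Cardinal.mk α)
    (f : Lam I → Equiv.Perm α)
    (hf1 : ∀ (p : Lam I) (a : I), f p = f (Lam.ext p a false) * f (Lam.ext p a true))
    (hf2 : ∀ p q : Lam I, f p * f q = f q * f p)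
    (hf3 : ∀ P Q : List (Lam I), Reduced P → Reduced Q → ¬ P.Perm Q →
      (P.map f).prod ≠ (Q.map f).prod)
    (L : Type v) [CompleteLattice L]
    (halg : ∀ x : L, sSup {d : L | IsCompactElement d ∧ d ≤ x} = x)
    (C : Set L) (hC : C = {x : L | IsCompactElement x ∧ x ≠ ⊥})
    (c : Lam I → L)
    (hcC : ∀ p, c p ∈ C) (hcsurj : ∀ x ∈ C, ∃ p, c p = x)
    (h2 : ∀ (p : Lam I) (a : I), c p ≤ c (Lam.ext p a false) ⊔ c (Lam.ext p a true))
    (J J' : Set L) (hJ : IsIdealIn C J) (hJ' : IsIdealIn C J') (hne : J ≠ J') :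
    Fmon f c J ≠ Fmon f c J' := by
  by_cases hsub : J ⊆ J'
  · obtain ⟨x, hxJ', hxJ⟩ := Set.exists_of_ssubset (ssubset_of_subset_of_ne hsub hne)
    exact (Fmon_key f hf1 hf2 hf3 C c hcC hcsurj h2 J' J hJ' hJ x hxJ' hxJ).symm
  · obtain ⟨x, hxJ, hxJ'⟩ := Set.not_subset.mp hsub
    exact Fmon_key f hf1 hf2 hf3 C c hcC hcsurj h2 J J' hJ hJ' x hxJ hxJ'
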